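/- Every non-identity element of G₃₅₁ has order 3 or 13; every element of order 3 has no fixed points on F₂₇, and every element of order 13 has exactly one fixed point on F₂₇. Consequently, G₃₅₁ contains exactly 26 elements of order 3 and exactly 324 elements of order 13. -/

import Mathlib

/-- `F₂₇`, a finite field with 27 elements. -/
abbrev F27 : Type := GaloisField 3 3

/-- `a` is a nonzero square in `F₂₇`. -/
def IsNonzeroSquare (a : F27) : Prop := a ≠ 0 ∧ ∃ c : F27, a = c ^ 2

/-- The set of affine permutations `x ↦ a·x + b` with `a` a nonzero square. -/
def affineSet : Set (Equiv.Perm F27) :=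
  { g | ∃ a b : F27, IsNonzeroSquare a ∧ ∀ x : F27, g x = a * x + b }

lemma cardF27 : Nat.card F27 = 27 := by rw [GaloisField.card 3 3 (by norm_num)]; norm_num

lemma cardU : Nat.card F27ˣ = 26 := by rw [Nat.card_units, cardF27]

lemma char3 : (3 : F27) = 0 := by exact_mod_cast CharP.cast_eq_zero F27 3

lemma pow26 {c : F27} (h : c ≠ 0) : c ^ 26 = 1 := by
  letI : Fintype F27 := Fintype.ofFinite _
  have := FiniteField.pow_card_sub_one_eq_one c h
  rwa [← Nat.card_eq_fintype_card, cardF27] at this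

lemma pow13 {a : F27} (ha : IsNonzeroSquare a) : a ^ 13 = 1 := by
  obtain ⟨h0, c, rfl⟩ := ha
  have hc : c ≠ 0 := by rintro rfl; simp at h0
  calc (c ^ 2) ^ 13 = c ^ 26 := by ring
  _ = 1 := pow26 hc

lemma nzsq_iff {a : F27} : IsNonzeroSquare a ↔ a ^ 13 = 1 := by
  constructor
  · exact pow13
  · intro h
    have h0 : a ≠ 0 := by rintro rfl; simp at h
    refine ⟨h0, a ^ 7, ?_⟩
    calc a = a ^ 13 * a := by rw [h, one_mul]
    _ = (a ^ 7) ^ 2 := by ring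

lemma pow_apply_aff (g : Equiv.Perm F27) (a b : F27) (h : ∀ x, g x = a * x + b) :
    ∀ (n : ℕ) (x : F27), (g ^ n) x = a ^ n * x + (∑ i ∈ Finset.range n, a ^ i) * b := by
  intro n
  induction n with
  | zero => intro x; simp
  | succ n ih =>
    intro x
    rw [pow_succ, Equiv.Perm.mul_apply, ih (g x), h x, Finset.sum_range_succ]
    ring

lemma ord3' (g : Equiv.Perm F27) (b : F27) (hb : b ≠ 0) (h : ∀ x, g x = 1 * x + b) :
    orderOf g = 3 := by
  haveI : Fact (Nat.Prime 3) := ⟨by norm_num⟩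
  apply orderOf_eq_prime
  · ext x
    rw [pow_apply_aff g 1 b h 3 x, Equiv.Perm.one_apply, Finset.sum_range_succ,
      Finset.sum_range_succ, Finset.sum_range_one]
    linear_combination b * char3
  · intro hg1
    apply hb
    have h0 := h 0
    rw [hg1] at h0
    simpa using h0.symm

lemma ord13' (g : Equiv.Perm F27) (a b : F27) (ha : a ^ 13 = 1) (ha1 : a ≠ 1)
    (h : ∀ x, g x = a * x + b) : orderOf g = 13 := by
  haveI : Fact (Nat.Prime 13) := ⟨by norm_num⟩
  apply orderOf_eq_prime
  · ext x
    rw [pow_apply_aff g a b h 13 x, geom_sum_eq ha1, ha]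
    simp
  · intro hg1
    apply ha1
    have h1 := h 1
    have h0 := h 0
    rw [hg1] at h1 h0
    have hb : b = 0 := by simpa using h0.symm
    rw [hb] at h1
    simpa using h1.symm

lemma card_sq_range : Nat.card (powMonoidHom 2 : F27ˣ →* F27ˣ).range = 13 := by
  set f := (powMonoidHom 2 : F27ˣ →* F27ˣ) with hf
  have hker : (f.ker : Set F27ˣ) = {1, -1} := by
    ext x
    simp only [SetLike.mem_coe, MonoidHom.mem_ker, Set.mem_insert_iff, Set.mem_singleton_iff]
    constructor
    · intro hx
      have hx' : (x : F27) * x = 1 := by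
        have := congrArg Units.val hx
        simpa [hf, powMonoidHom, sq] using this
      rcases mul_self_eq_one_iff.mp hx' with h | h
      · left; exact Units.ext (by simpa using h)
      · right; exact Units.ext (by simpa using h)
    · rintro (rfl | rfl) <;> apply Units.ext <;> simp [hf, powMonoidHom]
  have hne : (1 : F27ˣ) ≠ -1 := by
    intro h
    have h' : (1 : F27) = -1 := by
      have := congrArg Units.val h
      simpa using this
    have h2 : (2 : F27) = 0 := by linear_combination h'
    have : (1 : F27) = 0 := by linear_combination char3 - h2
    exact one_ne_zero this
  have hkcard : Nat.card f.ker = 2 := by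
    have e : Nat.card f.ker = ({1, -1} : Set F27ˣ).ncard := by
      rw [← Nat.card_coe_set_eq, ← hker, SetLike.coe_sort_coe]
    rw [e, Set.ncard_pair hne]
  have h1 : Nat.card F27ˣ = Nat.card (F27ˣ ⧸ f.ker) * Nat.card f.ker :=
    Subgroup.card_eq_card_quotient_mul_card_subgroup f.ker
  have h2 : Nat.card (F27ˣ ⧸ f.ker) = Nat.card f.range :=
    Nat.card_congr (QuotientGroup.quotientKerEquivRange f).toEquiv
  rw [cardU, h2, hkcard] at h1
  omega

lemma cardT : {a : F27 | a ^ 13 = 1}.ncard = 13 := by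
  have hT : {a : F27 | a ^ 13 = 1}
      = Units.val '' ((powMonoidHom 2 : F27ˣ →* F27ˣ).range : Set F27ˣ) := by
    ext a
    simp only [Set.mem_setOf_eq, Set.mem_image, SetLike.mem_coe, MonoidHom.mem_range]
    constructor
    · intro ha
      have h0 : a ≠ 0 := by rintro rfl; simp at ha
      refine ⟨Units.mk0 a h0, ⟨(Units.mk0 a h0) ^ 7, ?_⟩, rfl⟩
      apply Units.ext
      show ((Units.mk0 a h0 ^ 7) ^ 2 : F27ˣ).val = a
      push_cast
      calc (a ^ 7) ^ 2 = a ^ 13 * a := by ring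
      _ = a := by rw [ha, one_mul]
    · rintro ⟨u, ⟨v, rfl⟩, rfl⟩
      show (((powMonoidHom 2) v : F27ˣ) : F27) ^ 13 = 1
      have hv : ((powMonoidHom 2 v : F27ˣ) : F27) = (v : F27) ^ 2 := by
        simp [powMonoidHom]
      rw [hv]
      calc ((v : F27) ^ 2) ^ 13 = (v : F27) ^ 26 := by ring
      _ = 1 := pow26 (Units.ne_zero v)
  rw [hT, Set.ncard_image_of_injective _ (fun _ _ h => Units.ext h), ← Nat.card_coe_set_eq,
    SetLike.coe_sort_coe, card_sq_range]

lemma cardS : {a : F27 | a ^ 13 = 1 ∧ a ≠ 1}.ncard = 12 := by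
  have h : {a : F27 | a ^ 13 = 1 ∧ a ≠ 1} = {a : F27 | a ^ 13 = 1} \ {1} := by
    ext a; simp [Set.mem_diff]
  rw [h, Set.ncard_diff_singleton_of_mem (by simp), cardT]

noncomputable def affEquiv (a b : F27) (h : a ≠ 0) : Equiv.Perm F27 where
  toFun x := a * x + b
  invFun y := a⁻¹ * (y - b)
  left_inv x := by field_simp; ring
  right_inv y := by field_simp; ring

open Classical in
noncomputable def affF (p : F27 × F27) : Equiv.Perm F27 :=
  if h : p.1 = 0 then 1 else affEquiv p.1 p.2 h

lemma affF_apply (p : F27 × F27) (h : p.1 ≠ 0) (x : F27) : affF p x = p.1 * x + p.2 := by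
  simp only [affF, dif_neg h]; rfl

lemma ncard_prod_univ (S : Set F27) :
    (S ×ˢ (Set.univ : Set F27)).ncard = S.ncard * 27 := by
  rw [← Nat.card_coe_set_eq, Nat.card_congr (Equiv.Set.prod S Set.univ), Nat.card_prod,
    Nat.card_coe_set_eq, Nat.card_coe_set_eq, Set.ncard_univ, cardF27]

/-- Every non-identity element of `G₃₅₁` has order 3 or 13; elements of order 3 have no
fixed points, elements of order 13 have exactly one fixed point; there are exactly 26
elements of order 3 and 324 elements of order 13. -/
theorem statement1 (G : Subgroup (Equiv.Perm F27))
    (hG : (G : Set (Equiv.Perm F27)) = affineSet) :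
    (∀ g ∈ G, g ≠ 1 → orderOf g = 3 ∨ orderOf g = 13) ∧
    (∀ g ∈ G, orderOf g = 3 → ∀ x : F27, g x ≠ x) ∧
    (∀ g ∈ G, orderOf g = 13 → ∃! x : F27, g x = x) ∧
    { g : Equiv.Perm F27 | g ∈ G ∧ orderOf g = 3 }.ncard = 26 ∧
    { g : Equiv.Perm F27 | g ∈ G ∧ orderOf g = 13 }.ncard = 324 := by
  have mem_iff : ∀ g : Equiv.Perm F27, g ∈ G ↔ g ∈ affineSet := fun g => by
    rw [← SetLike.mem_coe, hG]
  have classify : ∀ g ∈ G, g = 1 ∨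
      (orderOf g = 3 ∧ ∃ b : F27, b ≠ 0 ∧ ∀ x, g x = 1 * x + b) ∨
      (orderOf g = 13 ∧ ∃ a b : F27, a ^ 13 = 1 ∧ a ≠ 1 ∧ ∀ x, g x = a * x + b) := by
    intro g hg
    obtain ⟨a, b, hsq, hab⟩ := (mem_iff g).mp hg
    by_cases ha1 : a = 1
    · subst ha1
      by_cases hb : b = 0
      · left; ext x; rw [hab x, hb]; simp
      · right; left
        exact ⟨ord3' g b hb hab, b, hb, hab⟩
    · right; right
      exact ⟨ord13' g a b (pow13 hsq) ha1 hab, a, b, pow13 hsq, ha1, hab⟩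
  refine ⟨?_, ?_, ?_, ?_, ?_⟩
  · intro g hg hg1
    rcases classify g hg with rfl | ⟨h3, _⟩ | ⟨h13, _⟩
    · exact absurd rfl hg1
    · exact Or.inl h3
    · exact Or.inr h13
  · intro g hg h3 x hx
    rcases classify g hg with rfl | ⟨_, b, hb, hab⟩ | ⟨h13, _⟩
    · simp at h3
    · rw [hab x, one_mul] at hx
      exact hb (by linear_combination hx)
    · rw [h13] at h3; norm_num at h3
  · intro g hg h13
    rcases classify g hg with rfl | ⟨h3, _⟩ | ⟨_, a, b, ha13, ha1, hab⟩
    · simp at h13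
    · rw [h3] at h13; norm_num at h13
    · have h1a : (1 : F27) - a ≠ 0 := sub_ne_zero_of_ne (Ne.symm ha1)
      refine ⟨(1 - a)⁻¹ * b, ?_, ?_⟩
      · show g ((1 - a)⁻¹ * b) = (1 - a)⁻¹ * b
        rw [hab]
        field_simp
        ring
      · intro y hy
        rw [hab y] at hy
        have hyy : (1 - a) * y = b := by linear_combination -hy
        rw [eq_inv_mul_iff_mul_eq₀ h1a]
        exact hyy
  · have e3 : {g : Equiv.Perm F27 | g ∈ G ∧ orderOf g = 3}
        = (fun b => affF (1, b)) '' {b : F27 | b ≠ 0} := by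
      ext g
      simp only [Set.mem_setOf_eq, Set.mem_image]
      constructor
      · rintro ⟨hg, h3⟩
        rcases classify g hg with rfl | ⟨_, b, hb, hab⟩ | ⟨h13, _⟩
        · simp at h3
        · refine ⟨b, hb, ?_⟩
          ext x
          rw [affF_apply (1, b) one_ne_zero x, hab x]
        · rw [h13] at h3; norm_num at h3
      · rintro ⟨b, hb, rfl⟩
        have habf : ∀ x, affF (1, b) x = 1 * x + b := fun x => affF_apply (1, b) one_ne_zero x
        have hmem : affF (1, b) ∈ G :=
          (mem_iff _).mpr ⟨1, b, ⟨one_ne_zero, 1, by ring⟩, habf⟩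
        exact ⟨hmem, ord3' _ b hb habf⟩
    have hinj : Set.InjOn (fun b => affF (1, b)) {b : F27 | b ≠ 0} := by
      intro b₁ _ b₂ _ h
      have h' : affF (1, b₁) = affF (1, b₂) := h
      have h0 : affF (1, b₁) 0 = affF (1, b₂) 0 := by rw [h']
      rw [affF_apply _ one_ne_zero, affF_apply _ one_ne_zero] at h0
      simpa using h0
    have hset : {b : F27 | b ≠ 0} = ({0} : Set F27)ᶜ := by ext; simp
    have hc := Set.ncard_add_ncard_compl ({0} : Set F27)
    rw [Set.ncard_singleton, cardF27] at hc
    rw [e3, Set.ncard_image_of_injOn hinj, hset]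
    omega
  · have e13 : {g : Equiv.Perm F27 | g ∈ G ∧ orderOf g = 13}
        = affF '' ({a : F27 | a ^ 13 = 1 ∧ a ≠ 1} ×ˢ (Set.univ : Set F27)) := by
      ext g
      simp only [Set.mem_setOf_eq, Set.mem_image, Set.mem_prod, Set.mem_univ, and_true]
      constructor
      · rintro ⟨hg, h13⟩
        rcases classify g hg with rfl | ⟨h3, _⟩ | ⟨_, a, b, ha13, ha1, hab⟩
        · simp at h13
        · rw [h3] at h13; norm_num at h13
        · have ha0 : a ≠ 0 := by rintro rfl; simp at ha13
          refine ⟨(a, b), ⟨ha13, ha1⟩, ?_⟩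
          ext x
          rw [affF_apply (a, b) ha0 x, hab x]
      · rintro ⟨⟨a, b⟩, ⟨ha13, ha1⟩, rfl⟩
        have ha0 : a ≠ 0 := by rintro rfl; simp at ha13
        have habf : ∀ x, affF (a, b) x = a * x + b := fun x => affF_apply (a, b) ha0 x
        have hmem : affF (a, b) ∈ G :=
          (mem_iff _).mpr ⟨a, b, nzsq_iff.mpr ha13, habf⟩
        exact ⟨hmem, ord13' _ a b ha13 ha1 habf⟩
    have hinj : Set.InjOn affF ({a : F27 | a ^ 13 = 1 ∧ a ≠ 1} ×ˢ (Set.univ : Set F27)) := by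
      intro p hp q hq h
      have hp0 : p.1 ≠ 0 := by rintro h0; exact absurd (h0 ▸ hp.1.1) (by simp)
      have hq0 : q.1 ≠ 0 := by rintro h0; exact absurd (h0 ▸ hq.1.1) (by simp)
      have h0 : affF p 0 = affF q 0 := by rw [h]
      have h1 : affF p 1 = affF q 1 := by rw [h]
      rw [affF_apply p hp0, affF_apply q hq0] at h0 h1
      simp only [mul_zero, zero_add, mul_one] at h0 h1
      exact Prod.ext (by linear_combination h1 - h0) h0
    rw [e13, Set.ncard_image_of_injOn hinj, ncard_prod_univ, cardS]
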